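/- arXiv:2603.28629 — 8 statements merged into one kernel-verified Lean document; each statement's English description precedes it below -/
import Mathlib

section
/- Let S : M_n(ℂ) → ℂ have group gradient D. Let U : ℝ → M_n(ℂ) be differentiable with U(t) invertible for all t, satisfying the anti-holomorphic gradient flow equation U'(t) = (D(U(t)))ᴴ · U(t). Then for every t, the map t ↦ S(U(t)) is differentiable with derivative tr((D(U(t)))ᴴ · D(U(t))). -/
open Matrix

attribute [local instance] Matrix.frobeniusNormedAddCommGroup Matrix.frobeniusNormedSpace

/-- If `D` is the group gradient of `S` and `U : ℝ → M_n(ℂ)` solves the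
anti-holomorphic gradient flow `U' = (D U)ᴴ * U` through invertible matrices, then
`t ↦ S (U t)` is differentiable with derivative `tr ((D (U t))ᴴ * D (U t))`. -/
theorem flow_action_derivative {n : ℕ} [NeZero n]
    (S : Matrix (Fin n) (Fin n) ℂ → ℂ)
    (D : Matrix (Fin n) (Fin n) ℂ → Matrix (Fin n) (Fin n) ℂ)
    (hS : Differentiable ℝ S)
    (hD : ∀ U : Matrix (Fin n) (Fin n) ℂ, IsUnit U →
      ∀ X : Matrix (Fin n) (Fin n) ℂ, fderiv ℝ S U (X * U) = (X * D U).trace)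
    (U : ℝ → Matrix (Fin n) (Fin n) ℂ)
    (hUinv : ∀ t : ℝ, IsUnit (U t))
    (hflow : ∀ t : ℝ, HasDerivAt U ((D (U t))ᴴ * U t) t) :
    ∀ t : ℝ, HasDerivAt (fun s : ℝ => S (U s)) (((D (U t))ᴴ * D (U t)).trace) t := by
  intro t
  have h := (hS (U t)).hasFDerivAt.comp_hasDerivAt t (hflow t)
  convert h using 1
  · rfl
  · rfl
  · exact (hD (U t) (hUinv t) ((D (U t))ᴴ)).symm
end

section
/- Let S : M_n(ℂ) → ℂ have group gradient D, and let U : ℝ → M_n(ℂ) be differentiable with U(t) invertible for all t and U'(t) = (D(U(t)))ᴴ · U(t). Then: (i) t ↦ Im S(U(t)) is constant; (ii) t ↦ Re S(U(t)) is monotone nondecreasing; (iii) the derivative of t ↦ Re S(U(t)) at time t equals tr((D(U(t)))ᴴ · D(U(t))), which is a nonnegative real number and vanishes if and only if D(U(t)) = 0 (i.e., U(t) is a critical point). -/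
open Matrix

attribute [local instance] Matrix.frobeniusNormedAddCommGroup Matrix.frobeniusNormedSpace

private lemma trace_AHA_eq {n : ℕ} (A : Matrix (Fin n) (Fin n) ℂ) :
    (Aᴴ * A).trace = ((∑ i, ∑ j, Complex.normSq (A j i)) : ℝ) := by
  simp only [Matrix.trace, Matrix.diag, Matrix.mul_apply, Matrix.conjTranspose_apply]
  push_cast
  congr 1; ext i; congr 1; ext j
  rw [Complex.normSq_eq_conj_mul_self]; rfl

/-- Along the anti-holomorphic gradient flow `U' = (D U)ᴴ * U` of an action `S`
with group gradient `D`: (i) `Im S(U(t))` is constant, (ii) `Re S(U(t))` is monotone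
nondecreasing, and (iii) the derivative of `Re S(U(t))` equals `tr((D(U(t)))ᴴ · D(U(t)))`,
which is a nonnegative real number vanishing iff `D(U(t)) = 0`. -/
theorem flow_monotonicity {n : ℕ} [NeZero n]
    (S : Matrix (Fin n) (Fin n) ℂ → ℂ)
    (D : Matrix (Fin n) (Fin n) ℂ → Matrix (Fin n) (Fin n) ℂ)
    (hS : Differentiable ℝ S)
    (hD : ∀ U : Matrix (Fin n) (Fin n) ℂ, IsUnit U →
      ∀ X : Matrix (Fin n) (Fin n) ℂ, fderiv ℝ S U (X * U) = (X * D U).trace)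
    (U : ℝ → Matrix (Fin n) (Fin n) ℂ)
    (hUinv : ∀ t : ℝ, IsUnit (U t))
    (hflow : ∀ t : ℝ, HasDerivAt U ((D (U t))ᴴ * U t) t) :
    (∀ t₁ t₂ : ℝ, (S (U t₁)).im = (S (U t₂)).im) ∧
    Monotone (fun t : ℝ => (S (U t)).re) ∧
    ∀ t : ℝ,
      HasDerivAt (fun s : ℝ => (S (U s)).re) (((D (U t))ᴴ * D (U t)).trace).re t ∧
      (((D (U t))ᴴ * D (U t)).trace).im = 0 ∧
      0 ≤ (((D (U t))ᴴ * D (U t)).trace).re ∧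
      (((D (U t))ᴴ * D (U t)).trace = 0 ↔ D (U t) = 0) := by
  -- derivative of S ∘ U
  have hSU : ∀ t : ℝ, HasDerivAt (fun s => S (U s)) (((D (U t))ᴴ * D (U t)).trace) t := by
    intro t
    have h1 : HasDerivAt (fun s => S (U s))
        (fderiv ℝ S (U t) ((D (U t))ᴴ * U t)) t :=
      (hS (U t)).hasFDerivAt.comp_hasDerivAt t (hflow t)
    rwa [hD (U t) (hUinv t) ((D (U t))ᴴ)] at h1
  have htr : ∀ t : ℝ, ((D (U t))ᴴ * D (U t)).trace
      = ((∑ i, ∑ j, Complex.normSq (D (U t) j i)) : ℝ) := fun t => trace_AHA_eq _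
  have him0 : ∀ t : ℝ, (((D (U t))ᴴ * D (U t)).trace).im = 0 := by
    intro t; rw [htr t]; simp
  have hre : ∀ t : ℝ, (((D (U t))ᴴ * D (U t)).trace).re
      = ∑ i, ∑ j, Complex.normSq (D (U t) j i) := by
    intro t; rw [htr t]; simp
  have hre0 : ∀ t : ℝ, 0 ≤ (((D (U t))ᴴ * D (U t)).trace).re := by
    intro t; rw [hre t]
    exact Finset.sum_nonneg fun i _ => Finset.sum_nonneg fun j _ => Complex.normSq_nonneg _
  -- derivative of real part
  have hRe : ∀ t : ℝ, HasDerivAt (fun s : ℝ => (S (U s)).re)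
      (((D (U t))ᴴ * D (U t)).trace).re t := by
    intro t
    exact (Complex.reCLM.hasFDerivAt.comp_hasDerivAt t (hSU t))
  have hIm : ∀ t : ℝ, HasDerivAt (fun s : ℝ => (S (U s)).im) 0 t := by
    intro t
    have := Complex.imCLM.hasFDerivAt.comp_hasDerivAt t (hSU t)
    have h2 : HasDerivAt (fun s : ℝ => (S (U s)).im) (((D (U t))ᴴ * D (U t)).trace).im t := this
    simpa [him0 t] using h2
  refine ⟨?_, ?_, ?_⟩
  · intro t₁ t₂
    have : ∀ t, (fun s : ℝ => (S (U s)).im) t = (fun s : ℝ => (S (U s)).im) 0 := by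
      intro t
      apply is_const_of_deriv_eq_zero (f := fun s : ℝ => (S (U s)).im)
      · exact fun s => (hIm s).differentiableAt
      · exact fun s => (hIm s).deriv
    exact (this t₁).trans (this t₂).symm
  · apply monotone_of_deriv_nonneg
    · exact fun s => (hRe s).differentiableAt
    · intro s; rw [(hRe s).deriv]; exact hre0 s
  · intro t
    refine ⟨hRe t, him0 t, hre0 t, ?_⟩
    constructor
    · intro h
      rw [htr t] at h
      have h' : (∑ i, ∑ j, Complex.normSq (D (U t) j i)) = 0 := by exact_mod_cast h
      ext i j
      have := (Finset.sum_eq_zero_iff_of_nonneg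
        (fun i _ => Finset.sum_nonneg fun j _ => Complex.normSq_nonneg _)).mp h' j
        (Finset.mem_univ _)
      have := (Finset.sum_eq_zero_iff_of_nonneg
        (fun k _ => Complex.normSq_nonneg _)).mp this i (Finset.mem_univ _)
      simpa using Complex.normSq_eq_zero.mp this
    · intro h; rw [h]; simp
end

section
/- Let β ∈ ℂ, let S(U) = −(β/(2n))·tr(U + U⁻¹) be the one-site action and DS(U) := −(β/(2n))·𝒫(U − U⁻¹) with 𝒫M := M − (tr M / n)·1. Let U : ℝ → M_n(ℂ) be differentiable with U(t) invertible for all t, satisfying the gradient flow U'(t) = (DS(U(t)))ᴴ · U(t). Then the derivative of t ↦ S(U(t)) equals tr((DS(U(t)))ᴴ·DS(U(t))); consequently Im S(U(t)) is constant in t and Re S(U(t)) is monotone nondecreasing in t. -/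
open Matrix

attribute [local instance] Matrix.frobeniusNormedAddCommGroup Matrix.frobeniusNormedSpace

/-- The one-site action `S(U) = −(β/(2n))·tr(U + U⁻¹)`. -/
noncomputable def oneSiteAction {n : ℕ} (β : ℂ) (U : Matrix (Fin n) (Fin n) ℂ) : ℂ :=
  -(β / (2 * (n : ℂ))) * (U + U⁻¹).trace

/-- The traceless projection `𝒫 M = M − (tr M / n)·1`. -/
noncomputable def tracelessPart {n : ℕ} (M : Matrix (Fin n) (Fin n) ℂ) :
    Matrix (Fin n) (Fin n) ℂ :=
  M - (M.trace / (n : ℂ)) • (1 : Matrix (Fin n) (Fin n) ℂ)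

/-- The group gradient `DS(U) = −(β/(2n))·𝒫(U − U⁻¹)` of the one-site action. -/
noncomputable def oneSiteGrad {n : ℕ} (β : ℂ) (U : Matrix (Fin n) (Fin n) ℂ) :
    Matrix (Fin n) (Fin n) ℂ :=
  -(β / (2 * (n : ℂ))) • tracelessPart (U - U⁻¹)

section Aux

attribute [local instance] Matrix.frobeniusNormedRing Matrix.frobeniusNormedAlgebra

variable {n : ℕ}

lemma aux_hasDerivAt_matrix_inv {U : ℝ → Matrix (Fin n) (Fin n) ℂ} {t : ℝ}
    {U' : Matrix (Fin n) (Fin n) ℂ}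
    (h : HasDerivAt U U' t) (hu : IsUnit (U t)) :
    HasDerivAt (fun s => (U s)⁻¹) (-((U t)⁻¹ * U' * (U t)⁻¹)) t := by
  obtain ⟨u, hu⟩ := hu
  have hf := hasFDerivAt_ringInverse (𝕜 := ℝ) u
  rw [hu] at hf
  have h2 := (hf.comp_hasDerivAt t h)
  have hinv : (↑u⁻¹ : Matrix (Fin n) (Fin n) ℂ) = (U t)⁻¹ := by
    rw [← hu, Matrix.coe_units_inv]
  have hfun : (Ring.inverse ∘ U) = fun s => (U s)⁻¹ :=
    funext fun s => (Matrix.nonsing_inv_eq_ringInverse _).symm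
  rw [hfun] at h2
  simp [hinv] at h2
  exact h2

lemma aux_hasDerivAt_trace {f : ℝ → Matrix (Fin n) (Fin n) ℂ} {t : ℝ}
    {f' : Matrix (Fin n) (Fin n) ℂ}
    (h : HasDerivAt f f' t) : HasDerivAt (fun s => (f s).trace) f'.trace t := by
  have hc := ((Matrix.traceLinearMap (Fin n) ℂ ℂ).toContinuousLinearMap.hasFDerivAt
    (x := f t)).restrictScalars ℝ
  have := hc.comp_hasDerivAt t h
  simp [Function.comp_def] at this
  exact this

lemma aux_trace_hsq (A : Matrix (Fin n) (Fin n) ℂ) :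
    (Aᴴ * A).trace = ((∑ j, ∑ i, Complex.normSq (A j i) : ℝ) : ℂ) := by
  rw [Matrix.trace, Finset.sum_comm]
  push_cast
  simp [Matrix.diag, Matrix.mul_apply, Complex.normSq_eq_conj_mul_self, Complex.star_def]

lemma aux_trace_oneSiteGrad [NeZero n] (β : ℂ) (V : Matrix (Fin n) (Fin n) ℂ) :
    (oneSiteGrad β V).trace = 0 := by
  have hn : (n : ℂ) ≠ 0 := Nat.cast_ne_zero.mpr (NeZero.ne n)
  simp [oneSiteGrad, tracelessPart, trace_smul, trace_sub, trace_one, smul_eq_mul]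

lemma aux_key [NeZero n] (β : ℂ) (V : Matrix (Fin n) (Fin n) ℂ) (hV : IsUnit V) :
    -(β / (2 * (n : ℂ))) * (((oneSiteGrad β V)ᴴ * V).trace +
      (-(V⁻¹ * ((oneSiteGrad β V)ᴴ * V) * V⁻¹)).trace)
    = ((oneSiteGrad β V)ᴴ * oneSiteGrad β V).trace := by
  have hn : (n : ℂ) ≠ 0 := Nat.cast_ne_zero.mpr (NeZero.ne n)
  have hdet : IsUnit V.det := (Matrix.isUnit_iff_isUnit_det V).mp hV
  set c := -(β / (2 * (n : ℂ))) with hc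
  set G := oneSiteGrad β V with hG
  have hGt : Gᴴ.trace = 0 := by
    rw [trace_conjTranspose, aux_trace_oneSiteGrad, star_zero]
  have h1 : (V⁻¹ * (Gᴴ * V) * V⁻¹).trace = (Gᴴ * V⁻¹).trace := by
    rw [← trace_mul_cycle, Matrix.mul_nonsing_inv_cancel_right _ _ hdet]
  have expand : G = c • (V - V⁻¹) - (c * ((V - V⁻¹).trace / (n : ℂ))) • 1 := by
    rw [hG, oneSiteGrad, tracelessPart, smul_sub, smul_smul]
  have expand2 : ∀ X : Matrix (Fin n) (Fin n) ℂ,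
      X * G = c • (X * (V - V⁻¹)) - (c * ((V - V⁻¹).trace / (n : ℂ))) • X := by
    intro X
    rw [expand, Matrix.mul_sub, Matrix.mul_smul, Matrix.mul_smul, Matrix.mul_one]
  have h2 : (Gᴴ * G).trace = c * (Gᴴ * (V - V⁻¹)).trace := by
    rw [expand2 Gᴴ, trace_sub, trace_smul, trace_smul, hGt, smul_eq_mul, smul_eq_mul,
      mul_zero, sub_zero]
  rw [h2, trace_neg, h1, Matrix.mul_sub, trace_sub]
  ring

end Aux

/-- Along the gradient flow `U' = (DS U)ᴴ · U` of the one-site model,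
the derivative of `t ↦ S(U(t))` equals `tr((DS(U(t)))ᴴ·DS(U(t)))`; consequently
`Im S(U(t))` is constant and `Re S(U(t))` is monotone nondecreasing. -/
theorem oneSite_flow_monotone {n : ℕ} [NeZero n] (β : ℂ)
    (U : ℝ → Matrix (Fin n) (Fin n) ℂ)
    (hUinv : ∀ t : ℝ, IsUnit (U t))
    (hflow : ∀ t : ℝ, HasDerivAt U ((oneSiteGrad β (U t))ᴴ * U t) t) :
    (∀ t : ℝ, HasDerivAt (fun s : ℝ => oneSiteAction β (U s))
        (((oneSiteGrad β (U t))ᴴ * oneSiteGrad β (U t)).trace) t) ∧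
    (∀ t₁ t₂ : ℝ, (oneSiteAction β (U t₁)).im = (oneSiteAction β (U t₂)).im) ∧
    Monotone (fun t : ℝ => (oneSiteAction β (U t)).re) := by
  have hS : ∀ t : ℝ, HasDerivAt (fun s : ℝ => oneSiteAction β (U s))
      (((oneSiteGrad β (U t))ᴴ * oneSiteGrad β (U t)).trace) t := by
    intro t
    have hinv := aux_hasDerivAt_matrix_inv (hflow t) (hUinv t)
    have h1 : HasDerivAt (fun s => (U s).trace + ((U s)⁻¹).trace)
        (((oneSiteGrad β (U t))ᴴ * U t).trace +
          (-((U t)⁻¹ * ((oneSiteGrad β (U t))ᴴ * U t) * (U t)⁻¹)).trace) t :=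
      (aux_hasDerivAt_trace (hflow t)).add (aux_hasDerivAt_trace hinv)
    have h2 := h1.const_mul (-(β / (2 * (n : ℂ))))
    rw [aux_key β (U t) (hUinv t)] at h2
    have hfun : (fun s => -(β / (2 * (n : ℂ))) * ((U s).trace + ((U s)⁻¹).trace)) =
        fun s : ℝ => oneSiteAction β (U s) := by
      funext s
      rw [oneSiteAction, trace_add]
    rwa [hfun] at h2
  refine ⟨hS, ?_, ?_⟩
  · have him : ∀ t, HasDerivAt (fun s => (oneSiteAction β (U s)).im) 0 t := by
      intro t
      have h := Complex.imCLM.hasFDerivAt.comp_hasDerivAt t (hS t)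
      have hz : ((((oneSiteGrad β (U t))ᴴ * oneSiteGrad β (U t)).trace)).im = 0 := by
        rw [aux_trace_hsq]; simp
      simpa [Function.comp_def, hz] using h
    intro t₁ t₂
    exact is_const_of_deriv_eq_zero (fun t => (him t).differentiableAt)
      (fun t => (him t).deriv) t₁ t₂
  · have hre : ∀ t, HasDerivAt (fun s => (oneSiteAction β (U s)).re)
        (((((oneSiteGrad β (U t))ᴴ * oneSiteGrad β (U t)).trace)).re) t := by
      intro t
      have h := Complex.reCLM.hasFDerivAt.comp_hasDerivAt t (hS t)
      simpa [Function.comp_def] using h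
    apply monotone_of_deriv_nonneg (fun t => (hre t).differentiableAt)
    intro t
    rw [(hre t).deriv, aux_trace_hsq]
    simp only [Complex.ofReal_re]
    exact Finset.sum_nonneg fun _ _ => Finset.sum_nonneg fun _ _ => Complex.normSq_nonneg _
end

section
/- Let U₀, π₀ be n×n complex matrices and set A := π₀ − π₀ᴴ. Define U(s) := exp(sA)·exp(sπ₀ᴴ)·U₀ and π(s) := exp(sA)·π₀·exp(−sA) for s ∈ ℝ. Then (U(s), π(s)) is the solution of the kinetic Hamilton equations: U(0) = U₀, π(0) = π₀, U'(s) = π(s)·U(s), and π'(s) = [π(s), π(s)ᴴ] = π(s)·π(s)ᴴ − π(s)ᴴ·π(s) for all s. -/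
open Matrix

attribute [local instance] Matrix.frobeniusNormedAddCommGroup Matrix.frobeniusNormedSpace

attribute [local instance] Matrix.frobeniusNormedRing Matrix.frobeniusNormedAlgebra

set_option maxHeartbeats 1000000

private lemma expDeriv {n : ℕ} (A : Matrix (Fin n) (Fin n) ℂ) (s : ℝ) :
    HasDerivAt (fun u : ℝ => NormedSpace.exp (u • A)) (NormedSpace.exp (s • A) * A) s := by
  exact hasDerivAt_exp_smul_const A s

private lemma expInv {n : ℕ} (A : Matrix (Fin n) (Fin n) ℂ) (s : ℝ) :
    NormedSpace.exp (-(s • A)) * NormedSpace.exp (s • A) = 1 := by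
  rw [← Matrix.exp_add_of_commute _ _ (Commute.neg_left (Commute.refl (s • A))), neg_add_cancel,
    NormedSpace.exp_zero]

/-- With `A = π₀ − π₀ᴴ`, the curves `U(s) = exp(sA)·exp(sπ₀ᴴ)·U₀` and
`π(s) = exp(sA)·π₀·exp(−sA)` solve the kinetic Hamilton equations
`U' = π·U`, `π' = [π, πᴴ]` with initial data `(U₀, π₀)`. -/
theorem kinetic_flow_solution {n : ℕ} [NeZero n]
    (U₀ π₀ : Matrix (Fin n) (Fin n) ℂ)
    (A : Matrix (Fin n) (Fin n) ℂ) (hA : A = π₀ - π₀ᴴ)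
    (U π : ℝ → Matrix (Fin n) (Fin n) ℂ)
    (hU : U = fun s : ℝ => NormedSpace.exp (s • A) * NormedSpace.exp (s • π₀ᴴ) * U₀)
    (hπ : π = fun s : ℝ => NormedSpace.exp (s • A) * π₀ * NormedSpace.exp (-(s • A))) :
    U 0 = U₀ ∧ π 0 = π₀ ∧
    (∀ s : ℝ, HasDerivAt U (π s * U s) s) ∧
    (∀ s : ℝ, HasDerivAt π (π s * (π s)ᴴ - (π s)ᴴ * π s) s) := by
  have hAH : Aᴴ = -A := by
    rw [hA, conjTranspose_sub, conjTranspose_conjTranspose, neg_sub]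
  refine ⟨?_, ?_, ?_, ?_⟩
  · simp [hU, NormedSpace.exp_zero]
  · simp [hπ, NormedSpace.exp_zero]
  · intro s
    set E : Matrix (Fin n) (Fin n) ℂ := NormedSpace.exp (s • A) with hE
    set F : Matrix (Fin n) (Fin n) ℂ := NormedSpace.exp (s • π₀ᴴ) with hF
    set E' : Matrix (Fin n) (Fin n) ℂ := NormedSpace.exp (-(s • A)) with hE'
    have hcF : F * π₀ᴴ = π₀ᴴ * F := ((Commute.refl π₀ᴴ).smul_left s).exp_left
    have h1 : E' * E = 1 := expInv A s
    have hπ₀ : π₀ = A + π₀ᴴ := by rw [hA, sub_add_cancel]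
    have hder : HasDerivAt U (E * π₀ * F * U₀) s := by
      rw [hU]
      have h := ((expDeriv A s).mul (expDeriv π₀ᴴ s)).mul_const U₀
      have e2 : (E * A * F + E * (F * π₀ᴴ)) * U₀ = E * π₀ * F * U₀ := by
        rw [hcF]
        conv_rhs => rw [hπ₀]
        noncomm_ring
      rw [← e2]
      exact h
    have heq : π s * U s = E * π₀ * F * U₀ := by
      simp only [hπ, hU]
      have h2 : E * π₀ * E' * (E * F * U₀) = E * π₀ * (E' * E) * (F * U₀) := by noncomm_ring
      rw [← hE, ← hF, ← hE', h2, h1, mul_one]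
      noncomm_ring
    rw [heq]
    exact hder
  · intro s
    set E : Matrix (Fin n) (Fin n) ℂ := NormedSpace.exp (s • A) with hE
    set E' : Matrix (Fin n) (Fin n) ℂ := NormedSpace.exp (-(s • A)) with hE'
    have h1 : E' * E = 1 := expInv A s
    have hcE' : E' * A = A * E' := (((Commute.refl A).smul_left s).neg_left).exp_left
    have hπH : (π s)ᴴ = E * π₀ᴴ * E' := by
      simp only [hπ]
      rw [conjTranspose_mul, conjTranspose_mul, ← Matrix.exp_conjTranspose,
        ← Matrix.exp_conjTranspose, conjTranspose_smul, conjTranspose_neg, conjTranspose_smul,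
        hAH, star_trivial, smul_neg, neg_neg, ← hE, ← hE']
      noncomm_ring
    have hπs : π s = E * π₀ * E' := by rw [hπ]
    have key : ∀ X Y : Matrix (Fin n) (Fin n) ℂ,
        (E * X * E') * (E * Y * E') = E * (X * Y) * E' := by
      intro X Y
      have h2 : E * X * E' * (E * Y * E') = E * X * (E' * E) * (Y * E') := by noncomm_ring
      rw [h2, h1, mul_one]
      noncomm_ring
    have hder : HasDerivAt π (E * A * π₀ * E' + E * π₀ * (E' * -A)) s := by
      rw [hπ]
      have h2 : HasDerivAt (fun u : ℝ => NormedSpace.exp (-(u • A)))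
          (NormedSpace.exp (-(s • A)) * -A) s := by
        simpa only [smul_neg] using expDeriv (-A) s
      exact ((expDeriv A s).mul_const π₀).mul h2
    have heq : π s * (π s)ᴴ - (π s)ᴴ * π s = E * A * π₀ * E' + E * π₀ * (E' * -A) := by
      have hcE'' : E' * -A = -A * E' := by rw [mul_neg, hcE', neg_mul]
      rw [hπH, hπs, key, key, hcE'', hA]
      noncomm_ring
    rw [heq]
    exact hder
end

section
/- Let π : ℝ → M_n(ℂ) be differentiable with π'(s) = [π(s), π(s)ᴴ] for all s. Then both the anti-hermitian part π(s) − π(s)ᴴ and the kinetic energy ½·Re tr(π(s)ᴴ·π(s)) are constant in s. -/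
open Matrix

attribute [local instance] Matrix.frobeniusNormedAddCommGroup Matrix.frobeniusNormedSpace

noncomputable def ctL (n : ℕ) : Matrix (Fin n) (Fin n) ℂ →L[ℝ] Matrix (Fin n) (Fin n) ℂ :=
  LinearMap.toContinuousLinearMap
    { toFun := conjTranspose
      map_add' := fun A B => conjTranspose_add A B
      map_smul' := fun r A => by
        ext i j
        simp [conjTranspose_apply, Matrix.smul_apply, Complex.conj_ofReal] }

noncomputable def trR (n : ℕ) : Matrix (Fin n) (Fin n) ℂ →L[ℝ] ℝ :=
  Complex.reCLM.comp (LinearMap.toContinuousLinearMap (Matrix.traceLinearMap (Fin n) ℝ ℂ))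

/-- Along a solution of `π' = [π, πᴴ]`, both the anti-hermitian part
`π − πᴴ` and the kinetic energy `½·Re tr(πᴴ·π)` are constant. -/
theorem kinetic_flow_invariants {n : ℕ} [NeZero n]
    (π : ℝ → Matrix (Fin n) (Fin n) ℂ)
    (hπ : ∀ s : ℝ, HasDerivAt π (π s * (π s)ᴴ - (π s)ᴴ * π s) s) :
    (∀ s₁ s₂ : ℝ, π s₁ - (π s₁)ᴴ = π s₂ - (π s₂)ᴴ) ∧
    (∀ s₁ s₂ : ℝ,
      (1 / 2 : ℝ) * (((π s₁)ᴴ * π s₁).trace).re = (1 / 2 : ℝ) * (((π s₂)ᴴ * π s₂).trace).re) := by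
  letI : NormedRing (Matrix (Fin n) (Fin n) ℂ) := Matrix.frobeniusNormedRing
  letI : NormedAlgebra ℝ (Matrix (Fin n) (Fin n) ℂ) := Matrix.frobeniusNormedAlgebra
  have hct : ∀ s, HasDerivAt (fun t => (π t)ᴴ)
      ((π s * (π s)ᴴ - (π s)ᴴ * π s)ᴴ) s := fun s => by
    have := ((ctL n).hasFDerivAt.comp_hasDerivAt s (hπ s))
    exact this
  have hD : ∀ s, (π s * (π s)ᴴ - (π s)ᴴ * π s)ᴴ = π s * (π s)ᴴ - (π s)ᴴ * π s := fun s => by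
    simp [conjTranspose_sub, conjTranspose_mul]
  constructor
  · have hg : ∀ s, HasDerivAt (fun t => π t - (π t)ᴴ) 0 s := fun s => by
      have := (hπ s).sub (hct s)
      rw [hD s, sub_self] at this
      exact this
    intro s₁ s₂
    exact is_const_of_deriv_eq_zero (fun s => (hg s).differentiableAt)
      (fun s => (hg s).deriv) s₁ s₂
  · have hh : ∀ s, HasDerivAt (fun t => ((π t)ᴴ * π t).trace.re) 0 s := fun s => by
      have hmul := (hct s).mul (hπ s)
      have := (trR n).hasFDerivAt.comp_hasDerivAt s hmul
      have hz : trR n ((π s * (π s)ᴴ - (π s)ᴴ * π s)ᴴ * π s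
          + (π s)ᴴ * (π s * (π s)ᴴ - (π s)ᴴ * π s)) = 0 := by
        rw [hD s]
        simp only [trR, ContinuousLinearMap.coe_comp', Function.comp_apply,
          LinearMap.coe_toContinuousLinearMap', Matrix.traceLinearMap_apply]
        simp only [Matrix.trace_add, Matrix.trace_sub, sub_mul, mul_sub, ← Matrix.mul_assoc]
        rw [Matrix.trace_mul_comm ((π s)ᴴ * π s) (π s),
          Matrix.trace_mul_comm ((π s)ᴴ * π s) ((π s)ᴴ)]
        simp [Matrix.mul_assoc]
      have h2 : HasDerivAt (fun t => trR n ((π t)ᴴ * π t)) 0 s := by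
        rw [← hz]; exact this
      simpa [trR] using h2
    intro s₁ s₂
    congr 1
    exact is_const_of_deriv_eq_zero (fun s => (hh s).differentiableAt)
      (fun s => (hh s).deriv) s₁ s₂
end

section
/- Let V : M_n(ℂ) → ℝ have group gradient DV. Let U, π : ℝ → M_n(ℂ) be differentiable with U(s) invertible for all s, satisfying Hamilton's equations U'(s) = π(s)·U(s) and π'(s) = −2·(DV(U(s)))ᴴ + [π(s), π(s)ᴴ]. Then the Hamiltonian H(s) := ½·Re tr(π(s)ᴴ·π(s)) + V(U(s)) is constant in s. -/
open Matrix

attribute [local instance] Matrix.frobeniusNormedAddCommGroup Matrix.frobeniusNormedSpace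

attribute [local instance] Matrix.frobeniusNormedRing Matrix.frobeniusNormedAlgebra

section aux

variable {n : ℕ}

noncomputable def traceReCLM : Matrix (Fin n) (Fin n) ℂ →L[ℝ] ℝ :=
  LinearMap.toContinuousLinearMap
    (Complex.reLm.comp ((Matrix.traceLinearMap (Fin n) ℂ ℂ).restrictScalars ℝ))

@[simp] lemma traceReCLM_apply (A : Matrix (Fin n) (Fin n) ℂ) :
    traceReCLM A = (A.trace).re := rfl

end aux

/-- For a potential `V` with group gradient `DV`, Hamilton's equations
`U' = π·U`, `π' = −2·(DV(U))ᴴ + [π, πᴴ]` conserve the Hamiltonian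
`H = ½·Re tr(πᴴ·π) + V(U)`. -/
theorem hamiltonian_conservation {n : ℕ} [NeZero n]
    (V : Matrix (Fin n) (Fin n) ℂ → ℝ)
    (DV : Matrix (Fin n) (Fin n) ℂ → Matrix (Fin n) (Fin n) ℂ)
    (hV : Differentiable ℝ V)
    (hDV : ∀ U : Matrix (Fin n) (Fin n) ℂ, IsUnit U →
      ∀ X : Matrix (Fin n) (Fin n) ℂ,
        fderiv ℝ V U (X * U) = ((X * DV U + Xᴴ * (DV U)ᴴ).trace).re)
    (U π : ℝ → Matrix (Fin n) (Fin n) ℂ)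
    (hUinv : ∀ s : ℝ, IsUnit (U s))
    (hU : ∀ s : ℝ, HasDerivAt U (π s * U s) s)
    (hπ : ∀ s : ℝ, HasDerivAt π
      ((-2 : ℂ) • (DV (U s))ᴴ + (π s * (π s)ᴴ - (π s)ᴴ * π s)) s) :
    ∀ s₁ s₂ : ℝ,
      (1 / 2 : ℝ) * (((π s₁)ᴴ * π s₁).trace).re + V (U s₁) =
      (1 / 2 : ℝ) * (((π s₂)ᴴ * π s₂).trace).re + V (U s₂) := by
  set H : ℝ → ℝ := fun s => (1 / 2 : ℝ) * (((π s)ᴴ * π s).trace).re + V (U s) with hHdef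
  have key : ∀ s : ℝ, HasDerivAt H 0 s := by
    intro s
    set P := π s with hP
    set P' := (-2 : ℂ) • (DV (U s))ᴴ + (P * Pᴴ - Pᴴ * P) with hP'
    -- derivative of πᴴ
    have h1 : HasDerivAt (fun t => (π t)ᴴ) P'ᴴ s := (hπ s).star
    have h2 : HasDerivAt (fun t => (π t)ᴴ * π t) (P'ᴴ * P + Pᴴ * P') s := h1.mul (hπ s)
    have h3 : HasDerivAt (fun t => (((π t)ᴴ * π t).trace).re)
        ((P'ᴴ * P + Pᴴ * P').trace).re s := by
      exact (traceReCLM.hasFDerivAt.comp_hasDerivAt s h2)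
    have h4 : HasDerivAt (fun t => V (U t)) (fderiv ℝ V (U s) (P * U s)) s :=
      (hV (U s)).hasFDerivAt.comp_hasDerivAt s (hU s)
    have h5 : HasDerivAt H
        ((1 / 2 : ℝ) * ((P'ᴴ * P + Pᴴ * P').trace).re + fderiv ℝ V (U s) (P * U s)) s :=
      (h3.const_mul (1 / 2 : ℝ)).add h4
    have hzero : (1 / 2 : ℝ) * ((P'ᴴ * P + Pᴴ * P').trace).re
        + fderiv ℝ V (U s) (P * U s) = 0 := by
      rw [hDV (U s) (hUinv s) P]
      have htr1 : (P'ᴴ * P).trace = star ((Pᴴ * P').trace) := by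
        rw [← Matrix.trace_conjTranspose, Matrix.conjTranspose_mul, Matrix.conjTranspose_conjTranspose]
      have htr2 : (Pᴴ * P').trace = (-2 : ℂ) * (Pᴴ * (DV (U s))ᴴ).trace := by
        rw [hP']
        simp only [Matrix.mul_add, Matrix.mul_sub, Matrix.trace_add, Matrix.trace_sub,
          Matrix.mul_smul, Matrix.trace_smul]
        rw [← Matrix.mul_assoc, ← Matrix.mul_assoc,
          Matrix.trace_mul_cycle Pᴴ P Pᴴ]
        ring_nf
      have htr3 : (Pᴴ * (DV (U s))ᴴ).trace = star ((P * DV (U s)).trace) := by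
        rw [← Matrix.trace_conjTranspose, Matrix.conjTranspose_mul]
        rw [Matrix.trace_mul_comm]
      simp only [Matrix.trace_add, Complex.add_re]
      rw [htr1, htr2, htr3]
      simp [Complex.add_re, Complex.mul_re]
      ring
    rw [hzero] at h5
    exact h5
  have hconst : ∀ s₁ s₂ : ℝ, H s₁ = H s₂ := by
    intro s₁ s₂
    exact is_const_of_deriv_eq_zero (fun t => (key t).differentiableAt)
      (fun t => (key t).deriv) s₁ s₂
  exact hconst
end

section
/- Let F : M_n(ℂ) → M_n(ℂ) be any map and ε ∈ ℝ, and let Φ denote the leapfrog MD step with force F and step size ε. Then Φ is exactly reversible: if Φ(U, π) = (U', π'), then Φ(U', −π') = (U, −π). Moreover, the half-step momentum π̃½ of the reversed step equals −exp(εA)·π½·exp(−εA), where π½ is the half-step momentum of the forward step and A = π½ − π½ᴴ. -/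
open Matrix

attribute [local instance] Matrix.frobeniusNormedAddCommGroup Matrix.frobeniusNormedSpace

/-- The leapfrog MD step with force `F` and step size `ε`:
`πh := π − ε·F(U)`, `A := πh − πhᴴ`, `U' := exp(εA)·exp(ε·πhᴴ)·U`,
`π' := exp(εA)·πh·exp(−εA) − ε·F(U')`. -/
noncomputable def leapfrog {n : ℕ} (F : Matrix (Fin n) (Fin n) ℂ → Matrix (Fin n) (Fin n) ℂ)
    (ε : ℝ) (p : Matrix (Fin n) (Fin n) ℂ × Matrix (Fin n) (Fin n) ℂ) :
    Matrix (Fin n) (Fin n) ℂ × Matrix (Fin n) (Fin n) ℂ :=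
  let πh := p.2 - ε • F p.1
  let A := πh - πhᴴ
  let U' := NormedSpace.exp (ε • A) * NormedSpace.exp (ε • πhᴴ) * p.1
  (U', NormedSpace.exp (ε • A) * πh * NormedSpace.exp (-(ε • A)) - ε • F U')

/-- The leapfrog MD step is exactly reversible: if `Φ(U, π) = (U', π')`
then `Φ(U', −π') = (U, −π)`, and the half-step momentum of the reversed step equals
`−exp(εA)·πh·exp(−εA)` with `πh = π − ε·F(U)`, `A = πh − πhᴴ`. -/
theorem leapfrog_reversible {n : ℕ} [NeZero n]
    (F : Matrix (Fin n) (Fin n) ℂ → Matrix (Fin n) (Fin n) ℂ) (ε : ℝ)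
    (U π U' π' : Matrix (Fin n) (Fin n) ℂ)
    (h : leapfrog F ε (U, π) = (U', π')) :
    leapfrog F ε (U', -π') = (U, -π) ∧
    (-π') - ε • F U' =
      -(NormedSpace.exp (ε • ((π - ε • F U) - (π - ε • F U)ᴴ)) * (π - ε • F U) *
        NormedSpace.exp (-(ε • ((π - ε • F U) - (π - ε • F U)ᴴ)))) := by
  set πh := π - ε • F U with hπh
  set A := πh - πhᴴ with hA
  set E := NormedSpace.exp (ε • A) with hE
  set Ei := NormedSpace.exp (-(ε • A)) with hEi
  -- extract the forward-step equations
  have hU' : U' = E * NormedSpace.exp (ε • πhᴴ) * U := (congrArg Prod.fst h).symm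
  have hπ' : π' = E * πh * Ei - ε • F U' := by
    have h2 : E * πh * Ei - ε • F (E * NormedSpace.exp (ε • πhᴴ) * U) = π' :=
      congrArg Prod.snd h
    rw [← hU'] at h2
    exact h2.symm
  -- basic facts about E
  have hunit : IsUnit E := Matrix.isUnit_exp _
  have hdet : IsUnit E.det := (Matrix.isUnit_iff_isUnit_det _).mp hunit
  have hEiinv : Ei = E⁻¹ := Matrix.exp_neg _
  have hEEi : E * Ei = 1 := by rw [hEiinv]; exact Matrix.mul_nonsing_inv _ hdet
  have hEiE : Ei * E = 1 := by rw [hEiinv]; exact Matrix.nonsing_inv_mul _ hdet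
  have hEEi' : ∀ X, E * (Ei * X) = X := fun X => by rw [← mul_assoc, hEEi, one_mul]
  have hEiE' : ∀ X, Ei * (E * X) = X := fun X => by rw [← mul_assoc, hEiE, one_mul]
  -- conjugate transposes
  have hsAH : (ε • A)ᴴ = -(ε • A) := by
    simp [hA, Matrix.conjTranspose_sub, smul_sub, neg_sub]
  have hEH : Eᴴ = Ei := by rw [hE, ← Matrix.exp_conjTranspose, hsAH]
  have hEiH : Eiᴴ = E := by
    rw [hEi, ← Matrix.exp_conjTranspose, Matrix.conjTranspose_neg, hsAH, neg_neg]
  -- E commutes with A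
  have hEA : E * A = A * E := (((Commute.refl A).smul_right ε).exp_right).symm.eq
  -- the reversed half-step momentum
  have hπt : -π' - ε • F U' = -(E * πh * Ei) := by
    rw [hπ']; abel
  refine ⟨?_, hπt⟩
  -- reversed step quantities
  have hπtH : (-(E * πh * Ei))ᴴ = -(E * πhᴴ * Ei) := by
    simp [Matrix.conjTranspose_mul, hEH, hEiH, mul_assoc]
  have hB : (-(E * πh * Ei)) - (-(E * πh * Ei))ᴴ = -A := by
    rw [hπtH]
    have h1 : E * πh * Ei - E * πhᴴ * Ei = E * A * Ei := by
      rw [hA]; noncomm_ring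
    have h2 : E * A * Ei = A := by
      rw [hEA, mul_assoc, hEEi, mul_one]
    calc -(E * πh * Ei) - -(E * πhᴴ * Ei)
        = -(E * πh * Ei - E * πhᴴ * Ei) := by abel
      _ = -A := by rw [h1, h2]
  -- exp computations for the reversed step
  have key1 : NormedSpace.exp (ε • (-(E * πh * Ei) - (-(E * πh * Ei))ᴴ)) = Ei := by
    rw [hB, smul_neg]
  have key1' : NormedSpace.exp (-(ε • (-(E * πh * Ei) - (-(E * πh * Ei))ᴴ))) = E := by
    rw [hB, smul_neg, neg_neg]
  have key2 : NormedSpace.exp (ε • (-(E * πh * Ei))ᴴ) =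
      E * NormedSpace.exp (-(ε • πhᴴ)) * Ei := by
    rw [hπtH, smul_neg]
    have h1 : -(ε • (E * πhᴴ * Ei)) = E * (-(ε • πhᴴ)) * E⁻¹ := by
      rw [← hEiinv]
      simp [Matrix.mul_smul, Matrix.smul_mul, mul_assoc]
    rw [h1, Matrix.exp_conj _ _ hunit, ← hEiinv]
  have hexppn : NormedSpace.exp (-(ε • πhᴴ)) * NormedSpace.exp (ε • πhᴴ) = 1 := by
    rw [Matrix.exp_neg]
    exact Matrix.nonsing_inv_mul _
      ((Matrix.isUnit_iff_isUnit_det _).mp (Matrix.isUnit_exp _))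
  -- assemble
  have hfst : Ei * (E * NormedSpace.exp (-(ε • πhᴴ)) * Ei) * U' = U := by
    rw [hU']
    calc Ei * (E * NormedSpace.exp (-(ε • πhᴴ)) * Ei) *
          (E * NormedSpace.exp (ε • πhᴴ) * U)
        = Ei * (E * (NormedSpace.exp (-(ε • πhᴴ)) *
            (Ei * (E * (NormedSpace.exp (ε • πhᴴ) * U))))) := by
          simp only [mul_assoc]
      _ = U := by rw [hEiE', hEiE', ← mul_assoc, hexppn, one_mul]
  have hsnd : Ei * -(E * πh * Ei) * E = -πh := by
    calc Ei * -(E * πh * Ei) * E = -(Ei * (E * (πh * (Ei * E)))) := by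
          simp only [mul_assoc, mul_neg, neg_mul]
      _ = -πh := by rw [hEiE, mul_one, hEiE']
  have hd : leapfrog F ε (U', -π') =
      (NormedSpace.exp (ε • (-π' - ε • F U' - (-π' - ε • F U')ᴴ)) *
        NormedSpace.exp (ε • (-π' - ε • F U')ᴴ) * U',
       NormedSpace.exp (ε • (-π' - ε • F U' - (-π' - ε • F U')ᴴ)) * (-π' - ε • F U') *
        NormedSpace.exp (-(ε • (-π' - ε • F U' - (-π' - ε • F U')ᴴ))) -
        ε • F (NormedSpace.exp (ε • (-π' - ε • F U' - (-π' - ε • F U')ᴴ)) *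
          NormedSpace.exp (ε • (-π' - ε • F U')ᴴ) * U')) := rfl
  rw [hd, hπt, key1, key1', key2, hfst, hsnd, Prod.mk.injEq]
  refine ⟨rfl, ?_⟩
  rw [hπh]
  abel
end

section
/- Let μ be the Haar probability measure on the special unitary group SU(2), and for U ∈ SU(2) define the energy density e(U) := −(1/4)·tr(U + U⁻¹), which is a real number since U⁻¹ = Uᴴ. Fix x ∈ ℝ (i.e., purely imaginary coupling β = ix) and suppose ∫ exp(−ix·e(U)) dμ(U) ≠ 0. Then the denominator ∫ exp(−ix·e(U)) dμ(U) is real, the numerator ∫ exp(−ix·e(U))·e(U) dμ(U) is purely imaginary, and hence the expectation value ⟨e⟩ := (∫ exp(−ix·e(U))·e(U) dμ(U)) / (∫ exp(−ix·e(U)) dμ(U)) has zero real part. -/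
open Matrix MeasureTheory

noncomputable instance : MeasurableSpace (Matrix.specialUnitaryGroup (Fin 2) ℂ) :=
  borel _

instance : BorelSpace (Matrix.specialUnitaryGroup (Fin 2) ℂ) := ⟨rfl⟩

/-- The energy density `e(U) = −(1/4)·tr(U + U⁻¹)` of the one-site `SU(2)` model
(a real number, since `U⁻¹ = Uᴴ` for `U ∈ SU(2)`). -/
noncomputable def energyDensity (U : Matrix.specialUnitaryGroup (Fin 2) ℂ) : ℝ :=
  ((-(1 / 4 : ℂ)) *
    (((U : Matrix (Fin 2) (Fin 2) ℂ) + (U : Matrix (Fin 2) (Fin 2) ℂ)⁻¹).trace)).re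

def su2NegOne : Matrix.specialUnitaryGroup (Fin 2) ℂ :=
  ⟨-1, by
    rw [Matrix.mem_specialUnitaryGroup_iff]
    refine ⟨by rw [Matrix.mem_unitaryGroup_iff]; simp, ?_⟩
    show Matrix.det (-1) = 1
    rw [Matrix.det_neg]; simp⟩

lemma su2_inv_eq_star (U : Matrix.specialUnitaryGroup (Fin 2) ℂ) :
    ((U : Matrix (Fin 2) (Fin 2) ℂ))⁻¹ = star (U : Matrix (Fin 2) (Fin 2) ℂ) :=
  Matrix.inv_eq_right_inv (Matrix.mem_unitaryGroup_iff.mp U.2.1)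

lemma energyDensity_eq (U : Matrix.specialUnitaryGroup (Fin 2) ℂ) :
    energyDensity U =
      ((-(1 / 4 : ℂ)) *
        (((U : Matrix (Fin 2) (Fin 2) ℂ) + star (U : Matrix (Fin 2) (Fin 2) ℂ)).trace)).re := by
  rw [energyDensity, su2_inv_eq_star]

lemma energyDensity_continuous : Continuous energyDensity := by
  have : Continuous fun U : Matrix.specialUnitaryGroup (Fin 2) ℂ =>
      ((-(1 / 4 : ℂ)) *
        (((U : Matrix (Fin 2) (Fin 2) ℂ) + star (U : Matrix (Fin 2) (Fin 2) ℂ)).trace)).re := by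
    apply Complex.continuous_re.comp
    apply Continuous.mul continuous_const
    exact (continuous_subtype_val.add continuous_subtype_val.star).matrix_trace
  simpa only [← energyDensity_eq] using this

lemma energyDensity_neg (U : Matrix.specialUnitaryGroup (Fin 2) ℂ) :
    energyDensity (su2NegOne * U) = - energyDensity U := by
  rw [energyDensity_eq, energyDensity_eq]
  have h : ((su2NegOne * U : Matrix.specialUnitaryGroup (Fin 2) ℂ) :
      Matrix (Fin 2) (Fin 2) ℂ) = -(U : Matrix (Fin 2) (Fin 2) ℂ) := by
    show ((su2NegOne : Matrix (Fin 2) (Fin 2) ℂ) * U) = _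
    show ((-1 : Matrix (Fin 2) (Fin 2) ℂ) * U) = _
    simp
  rw [h]
  simp only [star_neg, ← neg_add, Matrix.trace_neg, Complex.mul_re, Complex.neg_re,
    Complex.neg_im]
  ring

lemma integral_smul_left (μ : Measure (Matrix.specialUnitaryGroup (Fin 2) ℂ))
    [μ.IsMulLeftInvariant] (f : Matrix.specialUnitaryGroup (Fin 2) ℂ → ℂ)
    (hf : Continuous f) (g : Matrix.specialUnitaryGroup (Fin 2) ℂ) :
    ∫ U, f (g * U) ∂μ = ∫ U, f U ∂μ := by
  have h : Measure.map (g * ·) μ = μ := MeasureTheory.map_mul_left_eq_self μ g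
  calc ∫ U, f (g * U) ∂μ
      = ∫ U, f U ∂(Measure.map (g * ·) μ) := by
        rw [integral_map (continuous_mul_left g).measurable.aemeasurable
          (h ▸ hf.aestronglyMeasurable)]
    _ = ∫ U, f U ∂μ := by rw [h]

/-- For the Haar probability measure `μ` on `SU(2)` and purely imaginary
coupling `β = ix`, the partition function is real, the numerator of `⟨e⟩` is purely
imaginary, and hence `⟨e⟩` has zero real part. -/
theorem su2_energy_expectation_purely_imaginary
    (μ : Measure (Matrix.specialUnitaryGroup (Fin 2) ℂ))
    [IsProbabilityMeasure μ] [μ.IsMulLeftInvariant]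
    (x : ℝ)
    (hden : (∫ U, Complex.exp (-(Complex.I * (x : ℂ) * (energyDensity U : ℂ))) ∂μ) ≠ 0) :
    (∫ U, Complex.exp (-(Complex.I * (x : ℂ) * (energyDensity U : ℂ))) ∂μ).im = 0 ∧
    (∫ U, Complex.exp (-(Complex.I * (x : ℂ) * (energyDensity U : ℂ))) *
        (energyDensity U : ℂ) ∂μ).re = 0 ∧
    ((∫ U, Complex.exp (-(Complex.I * (x : ℂ) * (energyDensity U : ℂ))) *
        (energyDensity U : ℂ) ∂μ) /
      (∫ U, Complex.exp (-(Complex.I * (x : ℂ) * (energyDensity U : ℂ))) ∂μ)).re = 0 := by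
  set Z := ∫ U, Complex.exp (-(Complex.I * (x : ℂ) * (energyDensity U : ℂ))) ∂μ with hZdef
  set N := ∫ U, Complex.exp (-(Complex.I * (x : ℂ) * (energyDensity U : ℂ))) *
      (energyDensity U : ℂ) ∂μ with hNdef
  have hce : Continuous fun U => (energyDensity U : ℂ) :=
    Complex.continuous_ofReal.comp energyDensity_continuous
  have hcf : Continuous fun U => Complex.exp (-(Complex.I * (x : ℂ) * (energyDensity U : ℂ))) :=
    Complex.continuous_exp.comp (((continuous_const.mul hce).neg))
  -- conjugate of Z
  have hZ : (starRingEnd ℂ) Z = Z := by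
    rw [hZdef, ← integral_conj]
    have h1 : ∀ U, (starRingEnd ℂ) (Complex.exp (-(Complex.I * (x : ℂ) * (energyDensity U : ℂ))))
        = Complex.exp (-(Complex.I * (x : ℂ) * ((energyDensity (su2NegOne * U) : ℝ) : ℂ))) := by
      intro U
      rw [energyDensity_neg, ← Complex.exp_conj]
      push_cast
      congr 1
      simp [_root_.map_mul, Complex.conj_I, Complex.conj_ofReal]
    simp_rw [h1]
    exact integral_smul_left μ _ hcf su2NegOne
  have hN : (starRingEnd ℂ) N = -N := by
    rw [hNdef, ← integral_conj]
    have h1 : ∀ U, (starRingEnd ℂ) (Complex.exp (-(Complex.I * (x : ℂ) * (energyDensity U : ℂ))) *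
        (energyDensity U : ℂ))
        = -(Complex.exp (-(Complex.I * (x : ℂ) * ((energyDensity (su2NegOne * U) : ℝ) : ℂ))) *
          ((energyDensity (su2NegOne * U) : ℝ) : ℂ)) := by
      intro U
      rw [energyDensity_neg, _root_.map_mul, ← Complex.exp_conj]
      push_cast
      simp only [map_neg, _root_.map_mul, Complex.conj_I, Complex.conj_ofReal, mul_neg,
        neg_mul, neg_neg]
    simp_rw [h1, integral_neg]
    exact congrArg Neg.neg (integral_smul_left μ (fun U => Complex.exp (-(Complex.I * (x : ℂ) * (energyDensity U : ℂ))) *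
      (energyDensity U : ℂ)) (hcf.mul hce) su2NegOne)
  have hZim : Z.im = 0 := by
    have := congrArg Complex.im hZ
    simp [Complex.conj_im] at this
    linarith [this]
  have hNre : N.re = 0 := by
    have := congrArg Complex.re hN
    simp [Complex.conj_re, Complex.neg_re] at this
    linarith [this]
  refine ⟨hZim, hNre, ?_⟩
  rw [Complex.div_re, hNre, hZim]
  simp
end
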